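/- In the process calculus with inaction 0, action prefix, choice, interleaving parallel composition, and iteration prefix a*P (a ≠ τ), the process expression a*0 has no parallel decomposition modulo branching bisimilarity: there is no finite multiset of indecomposable equivalence classes whose parallel composition is branching bisimilar to a*0. In particular, a*0 is branching bisimilar to a*0 ∥ a*0. -/

import Mathlib

/-- Process expressions: inaction, prefix, choice, interleaving parallel composition,
and iteration prefix. Labels are `Option A`, with `none` playing the role of τ. -/
inductive PExp (A : Type) : Type
  | nil : PExp A
  | pre : Option A → PExp A → PExp A
  | choice : PExp A → PExp A → PExp A
  | par : PExp A → PExp A → PExp A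
  | star : Option A → PExp A → PExp A

namespace PExp

/-- The labelled transition relation. -/
inductive Step {A : Type} : PExp A → Option A → PExp A → Prop
  | pre (α : Option A) (P : PExp A) : Step (PExp.pre α P) α P
  | choiceL {P α P'} (Q) : Step P α P' → Step (PExp.choice P Q) α P'
  | choiceR {Q α Q'} (P) : Step Q α Q' → Step (PExp.choice P Q) α Q'
  | parL {P α P'} (Q) : Step P α P' → Step (PExp.par P Q) α (PExp.par P' Q)
  | parR {Q α Q'} (P) : Step Q α Q' → Step (PExp.par P Q) α (PExp.par P Q')
  | star (α : Option A) (P : PExp A) : Step (PExp.star α P) α (PExp.star α P)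
  | starStep {P β P'} (α) : Step P β P' → Step (PExp.star α P) β P'

/-- P ⇒ Q : zero or more τ-steps. -/
def TauSteps {A : Type} (P Q : PExp A) : Prop :=
  Relation.ReflTransGen (fun X Y => Step X none Y) P Q

/-- P (→α) Q or (α = τ and P = Q). -/
def OptStep {A : Type} (P : PExp A) (α : Option A) (P' : PExp A) : Prop :=
  Step P α P' ∨ (α = none ∧ P = P')

/-- R is a branching bisimulation. -/
def IsBranchingBisim {A : Type} (R : PExp A → PExp A → Prop) : Prop :=
  Symmetric R ∧ ∀ P Q, R P Q → ∀ α P', Step P α P' →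
    ∃ Q'' Q', TauSteps Q Q'' ∧ OptStep Q'' α Q' ∧ R P Q'' ∧ R P' Q'

/-- Branching bisimilarity. -/
def BBisim {A : Type} (P Q : PExp A) : Prop :=
  ∃ R, IsBranchingBisim R ∧ R P Q

/-- R is a weak bisimulation. -/
def IsWeakBisim {A : Type} (R : PExp A → PExp A → Prop) : Prop :=
  Symmetric R ∧ ∀ P Q, R P Q → ∀ α P', Step P α P' →
    ∃ Q'' Q''' Q', TauSteps Q Q'' ∧ OptStep Q'' α Q''' ∧ TauSteps Q''' Q' ∧ R P' Q'

/-- Weak bisimilarity. -/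
def WBisim {A : Type} (P Q : PExp A) : Prop :=
  ∃ R, IsWeakBisim R ∧ R P Q

/-- A step with some label. -/
def AnyStep {A : Type} (P Q : PExp A) : Prop := ∃ α, Step P α Q

/-- Reachability: reflexive-transitive closure of the one-step transition relation. -/
def Reaches {A : Type} : PExp A → PExp A → Prop := Relation.ReflTransGen AnyStep

/-- P has no outgoing transitions. -/
def Deadlock {A : Type} (P : PExp A) : Prop := ∀ α Q, ¬ Step P α Q

/-- P can reach a deadlocked expression. -/
def WeaklyNormed {A : Type} (P : PExp A) : Prop := ∃ P', Reaches P P' ∧ Deadlock P'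

/-- `NormWitness P k`: there is a complete transition sequence from P to a deadlocked
expression containing exactly k non-τ transitions. -/
inductive NormWitness {A : Type} : PExp A → ℕ → Prop
  | dead {P} : Deadlock P → NormWitness P 0
  | tau {P P' k} : Step P none P' → NormWitness P' k → NormWitness P k
  | act {P a P' k} : Step P (some a) P' → NormWitness P' k → NormWitness P (k + 1)

/-- The weak norm of P is k: k is the least number of non-τ transitions in a complete
transition sequence from P. -/
def IsWeakNorm {A : Type} (P : PExp A) (k : ℕ) : Prop :=
  NormWitness P k ∧ ∀ j, NormWitness P j → k ≤ j

/-- P ⇒a Q : a weak a-step (a ≠ τ), absorbing τ-steps on both sides. -/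
def WStep {A : Type} (P : PExp A) (a : A) (Q : PExp A) : Prop :=
  ∃ P₁ Q₁, TauSteps P P₁ ∧ Step P₁ (some a) Q₁ ∧ TauSteps Q₁ Q

/-- `WChain P k`: there is a sequence of k weak (non-τ) steps starting from P. -/
inductive WChain {A : Type} : PExp A → ℕ → Prop
  | zero (P) : WChain P 0
  | succ {P a P' k} : WStep P a P' → WChain P' k → WChain P (k + 1)

/-- P is weakly bounded: some k bounds the number of non-τ steps of every sequence. -/
def WeaklyBounded {A : Type} (P : PExp A) : Prop := ∃ k, ∀ l, WChain P l → l ≤ k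

/-- The weak depth of P is k: the length of a longest transition sequence from P not
counting τ-transitions. -/
def IsWeakDepth {A : Type} (P : PExp A) (k : ℕ) : Prop :=
  WChain P k ∧ ∀ l, WChain P l → l ≤ k

/-- Indecomposability with respect to a behavioural equivalence E: P is not equivalent
to 0 nor to a parallel composition of two processes not equivalent to 0. -/
def IndecompWith {A : Type} (E : PExp A → PExp A → Prop) (P : PExp A) : Prop :=
  ¬ E P PExp.nil ∧ ∀ Q R, E P (PExp.par Q R) → E Q PExp.nil ∨ E R PExp.nil

end PExp

open PExp
section Aux

variable {A : Type} {a : A}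

private lemma step_star_nil {α : Option A} {Q : PExp A}
    (h : Step (star (some a) nil) α Q) : α = some a ∧ Q = star (some a) nil := by
  cases h with
  | star => exact ⟨rfl, rfl⟩
  | starStep _ h' => nomatch h'

private lemma tauSteps_star_nil {Q : PExp A} (h : TauSteps (star (some a) nil) Q) :
    Q = star (some a) nil := by
  induction h with
  | refl => rfl
  | tail _ h2 ih => rw [ih] at h2; exact (step_star_nil h2).2

private lemma tauSteps_nil {Q : PExp A} (h : TauSteps (nil : PExp A) Q) : Q = nil := by
  induction h with
  | refl => rfl
  | tail _ h2 ih => rw [ih] at h2; nomatch h2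

private lemma step_parSS {α : Option A} {Q : PExp A}
    (h : Step (par (star (some a) nil) (star (some a) nil)) α Q) :
    α = some a ∧ Q = par (star (some a) nil) (star (some a) nil) := by
  cases h with
  | parL _ h' =>
      obtain ⟨h1, h2⟩ := step_star_nil h'
      exact ⟨h1, by rw [h2]⟩
  | parR _ h' =>
      obtain ⟨h1, h2⟩ := step_star_nil h'
      exact ⟨h1, by rw [h2]⟩

/-- a*0 can't be branching bisimilar to nil (stated via a relation with R S nil). -/
private lemma not_rel_S_nil {R : PExp A → PExp A → Prop}
    (hR : ∀ P Q, R P Q → ∀ α P', Step P α P' →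
      ∃ Q'' Q', TauSteps Q Q'' ∧ OptStep Q'' α Q' ∧ R P Q'' ∧ R P' Q')
    (hrel : R (star (some a) nil) nil) : False := by
  obtain ⟨Q'', Q', ht, ho, -, -⟩ :=
    hR _ _ hrel (some a) (star (some a) nil) (Step.star (some a) nil)
  have hq : Q'' = nil := tauSteps_nil ht
  subst hq
  rcases ho with h | h
  · nomatch h
  · nomatch h.1

private lemma not_bbisim_S_nil : ¬ BBisim (star (some a) nil) (nil : PExp A) := by
  rintro ⟨R, ⟨hsym, hR⟩, hrel⟩
  exact not_rel_S_nil hR hrel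

private lemma not_bbisim_nil_S : ¬ BBisim (nil : PExp A) (star (some a) nil) := by
  rintro ⟨R, ⟨hsym, hR⟩, hrel⟩
  exact not_rel_S_nil (R := fun U V => R V U)
    (fun P Q h α P' hst => by
      obtain ⟨Q'', Q', ht, ho, h1, h2⟩ := hR P Q (hsym h) α P' hst
      exact ⟨Q'', Q', ht, ho, hsym h1, hsym h2⟩) hrel

/-- If every state reachable from Z only performs a/τ steps and always has a weak
a-step available, then Z is branching bisimilar to a*0. -/
private lemma bbisim_of_live (a : A) (Z : PExp A)
    (hlab : ∀ U α U', Reaches Z U → Step U α U' → α = some a ∨ α = none)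
    (hnd : ∀ U, Reaches Z U → ∃ U₁ U₂, TauSteps U U₁ ∧ Step U₁ (some a) U₂) :
    BBisim Z (star (some a) nil) := by
  refine ⟨fun U V => (Reaches Z U ∧ V = star (some a) nil) ∨
      (U = star (some a) nil ∧ Reaches Z V), ⟨?_, ?_⟩,
      Or.inl ⟨Relation.ReflTransGen.refl, rfl⟩⟩
  · rintro U V (⟨h1, h2⟩ | ⟨h1, h2⟩)
    · exact Or.inr ⟨h2, h1⟩
    · exact Or.inl ⟨h2, h1⟩
  · rintro P Q (⟨hreach, rfl⟩ | ⟨rfl, hreach⟩) α P' hst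
    · rcases hlab P α P' hreach hst with rfl | rfl
      · exact ⟨star (some a) nil, star (some a) nil, Relation.ReflTransGen.refl,
          Or.inl (Step.star (some a) nil), Or.inl ⟨hreach, rfl⟩,
          Or.inl ⟨hreach.tail ⟨_, hst⟩, rfl⟩⟩
      · exact ⟨star (some a) nil, star (some a) nil, Relation.ReflTransGen.refl,
          Or.inr ⟨rfl, rfl⟩, Or.inl ⟨hreach, rfl⟩,
          Or.inl ⟨hreach.tail ⟨_, hst⟩, rfl⟩⟩
    · obtain ⟨rfl, rfl⟩ := step_star_nil hst
      obtain ⟨U₁, U₂, ht, hs⟩ := hnd Q hreach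
      have hr1 : Reaches Z U₁ :=
        hreach.trans (Relation.ReflTransGen.lift (p := AnyStep) id (fun _ _ h => ⟨none, h⟩) _ _ ht)
      exact ⟨U₁, U₂, ht, Or.inl hs, Or.inr ⟨rfl, hr1⟩,
        Or.inr ⟨rfl, hr1.tail ⟨_, hs⟩⟩⟩

end Aux
section Main

variable {A : Type} {a : A}

private lemma factor_bbisim {R : PExp A → PExp A → Prop} (hsym : Symmetric R)
    (hR : ∀ P Q, R P Q → ∀ α P', Step P α P' →
      ∃ Q'' Q', TauSteps Q Q'' ∧ OptStep Q'' α Q' ∧ R P Q'' ∧ R P' Q')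
    {X Y : PExp A} (hXY : R (par X Y) (star (some a) nil)) :
    BBisim X (star (some a) nil) ∨ BBisim Y (star (some a) nil) := by
  -- closure of "good" states (related to a*0) under steps, with label restriction
  have good_step : ∀ U α U', R U (star (some a) nil) → Step U α U' →
      (α = some a ∨ α = none) ∧ R U' (star (some a) nil) := by
    intro U α U' hU hst
    obtain ⟨Q'', Q', ht, ho, -, hrel⟩ := hR U _ hU α U' hst
    have hq : Q'' = star (some a) nil := tauSteps_star_nil ht
    subst hq
    rcases ho with h | ⟨h1, h2⟩
    · obtain ⟨ha, hb⟩ := step_star_nil h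
      exact ⟨Or.inl ha, hb ▸ hrel⟩
    · exact ⟨Or.inr h1, h2 ▸ hrel⟩
  -- every good state has a weak a-step
  have good_weak : ∀ U, R U (star (some a) nil) →
      ∃ U₁ U₂, TauSteps U U₁ ∧ Step U₁ (some a) U₂ := by
    intro U hU
    obtain ⟨U₁, U₂, ht, ho, -, -⟩ :=
      hR _ U (hsym hU) (some a) (star (some a) nil) (Step.star (some a) nil)
    rcases ho with h | h
    · exact ⟨U₁, U₂, ht, h⟩
    · nomatch h.1
  have good_reach : ∀ U V, R U (star (some a) nil) → Reaches U V →
      R V (star (some a) nil) := by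
    intro U V hU hr
    induction hr with
    | refl => exact hU
    | tail _ h2 ih => obtain ⟨β, hst⟩ := h2; exact (good_step _ _ _ ih hst).2
  have reach_parL : ∀ {U U' : PExp A} (V : PExp A), Reaches U U' →
      Reaches (par U V) (par U' V) := by
    intro U U' V h
    induction h with
    | refl => exact Relation.ReflTransGen.refl
    | tail _ h2 ih => obtain ⟨β, hst⟩ := h2; exact ih.tail ⟨β, Step.parL V hst⟩
  have reach_parR : ∀ (U : PExp A) {V V' : PExp A}, Reaches V V' →
      Reaches (par U V) (par U V') := by
    intro U V V' h
    induction h with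
    | refl => exact Relation.ReflTransGen.refl
    | tail _ h2 ih => obtain ⟨β, hst⟩ := h2; exact ih.tail ⟨β, Step.parR U hst⟩
  have tau_par : ∀ {U V W : PExp A}, TauSteps (par U V) W →
      ∃ U₁ V₁, W = par U₁ V₁ ∧ TauSteps U U₁ ∧ TauSteps V V₁ := by
    intro U V W h
    induction h with
    | refl => exact ⟨U, V, rfl, Relation.ReflTransGen.refl, Relation.ReflTransGen.refl⟩
    | tail _ h2 ih =>
        obtain ⟨U₁, V₁, rfl, hu, hv⟩ := ih
        cases h2 with
        | parL _ h' => exact ⟨_, V₁, rfl, hu.tail h', hv⟩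
        | parR _ h' => exact ⟨U₁, _, rfl, hu, hv.tail h'⟩
  -- a state is "dull" if it has no weak a-step
  by_cases hdx : ∃ X₀, Reaches X X₀ ∧ ∀ Z₁ Z₂, TauSteps X₀ Z₁ → ¬ Step Z₁ (some a) Z₂
  · -- some dull state reachable from X: then Y is live everywhere
    obtain ⟨X₀, hrx, hdull⟩ := hdx
    right
    refine bbisim_of_live a Y ?_ ?_
    · intro U α U' hr hst
      have hg : R (par X U) (star (some a) nil) :=
        good_reach _ _ hXY (reach_parR X hr)
      exact (good_step _ _ _ hg (Step.parR X hst)).1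
    · intro U hr
      by_contra h
      push_neg at h
      have hg : R (par X₀ U) (star (some a) nil) :=
        good_reach _ _ hXY ((reach_parL Y hrx).trans (reach_parR X₀ hr))
      obtain ⟨U₁, U₂, ht, hst⟩ := good_weak _ hg
      obtain ⟨X₁, Y₁, rfl, hxu, hyu⟩ := tau_par ht
      cases hst with
      | parL _ h' => exact hdull X₁ _ hxu h'
      | parR _ h' => exact h Y₁ _ hyu h'
  · -- X is live everywhere
    left
    push_neg at hdx
    refine bbisim_of_live a X ?_ ?_
    · intro U α U' hr hst
      have hg : R (par U Y) (star (some a) nil) :=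
        good_reach _ _ hXY (reach_parL Y hr)
      exact (good_step _ _ _ hg (Step.parL Y hst)).1
    · intro U hr
      obtain ⟨Z₁, Z₂, h1, h2⟩ := hdx U hr
      exact ⟨Z₁, Z₂, h1, h2⟩

private lemma bbisim_parSS {P : PExp A} (h : BBisim P (star (some a) nil)) :
    BBisim P (par (star (some a) nil) (star (some a) nil)) := by
  obtain ⟨R, ⟨hsym, hR⟩, hrel⟩ := h
  refine ⟨fun U V => (R U (star (some a) nil) ∧
      V = par (star (some a) nil) (star (some a) nil)) ∨
      (U = par (star (some a) nil) (star (some a) nil) ∧ R V (star (some a) nil)),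
      ⟨?_, ?_⟩, Or.inl ⟨hrel, rfl⟩⟩
  · rintro U V (⟨h1, h2⟩ | ⟨h1, h2⟩)
    · exact Or.inr ⟨h2, h1⟩
    · exact Or.inl ⟨h2, h1⟩
  · rintro U V (⟨hU, rfl⟩ | ⟨rfl, hV⟩) α U' hst
    · obtain ⟨Q'', Q', ht, ho, -, h2⟩ := hR U _ hU α U' hst
      have hq : Q'' = star (some a) nil := tauSteps_star_nil ht
      subst hq
      rcases ho with h | ⟨h1, heq⟩
      · obtain ⟨rfl, hb⟩ := step_star_nil h
        exact ⟨_, _, Relation.ReflTransGen.refl,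
          Or.inl (Step.parL _ (Step.star (some a) nil)),
          Or.inl ⟨hU, rfl⟩, Or.inl ⟨hb ▸ h2, rfl⟩⟩
      · subst h1
        exact ⟨_, _, Relation.ReflTransGen.refl, Or.inr ⟨rfl, rfl⟩,
          Or.inl ⟨hU, rfl⟩, Or.inl ⟨heq ▸ h2, rfl⟩⟩
    · obtain ⟨rfl, rfl⟩ := step_parSS hst
      obtain ⟨V₁, V₂, ht, ho, h1, h2⟩ :=
        hR _ V (hsym hV) (some a) (star (some a) nil) (Step.star (some a) nil)
      rcases ho with h | h
      · exact ⟨V₁, V₂, ht, Or.inl h, Or.inr ⟨rfl, hsym h1⟩, Or.inr ⟨rfl, hsym h2⟩⟩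
      · nomatch h.1

private lemma no_decomp (a : A) : ∀ l : List (PExp A),
    (∀ P ∈ l, IndecompWith BBisim P) →
    ¬ BBisim (l.foldr par nil) (star (some a) nil)
  | [], _, h => not_bbisim_nil_S h
  | P :: rest, hind, h => by
      obtain ⟨R, ⟨hsym, hR⟩, hrel⟩ := h
      rcases factor_bbisim hsym hR hrel with hP | hT
      · have h2 := bbisim_parSS hP
        rcases (hind P (by simp)).2 _ _ h2 with hs | hs <;>
          exact not_bbisim_S_nil hs
      · exact no_decomp a rest (fun Q hq => hind Q (by simp [hq]))
          ⟨_, ⟨hT.choose_spec.1.1, hT.choose_spec.1.2⟩, hT.choose_spec.2⟩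

end Main
/-- The process a*0 (a ≠ τ) is branching bisimilar to a*0 ∥ a*0, and it has no
parallel decomposition modulo branching bisimilarity: no finite collection of
indecomposable processes has a parallel composition branching bisimilar to a*0. -/
theorem star_nil_no_decomposition (A : Type) (a : A) :
    BBisim (star (some a) nil) (par (star (some a) nil) (star (some a) nil)) ∧
    ¬ ∃ l : List (PExp A),
        (∀ P ∈ l, IndecompWith BBisim P) ∧
        BBisim (l.foldr par nil) (star (some a) nil) := by
  constructor
  · -- explicit branching bisimulation for a*0 ~ a*0 ∥ a*0
    refine ⟨fun U V =>
        (U = star (some a) nil ∧ V = par (star (some a) nil) (star (some a) nil)) ∨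
        (U = par (star (some a) nil) (star (some a) nil) ∧ V = star (some a) nil) ∨
        U = V, ⟨?_, ?_⟩, Or.inl ⟨rfl, rfl⟩⟩
    · rintro U V (⟨rfl, rfl⟩ | ⟨rfl, rfl⟩ | rfl)
      · exact Or.inr (Or.inl ⟨rfl, rfl⟩)
      · exact Or.inl ⟨rfl, rfl⟩
      · exact Or.inr (Or.inr rfl)
    · rintro U V (⟨rfl, rfl⟩ | ⟨rfl, rfl⟩ | rfl) α U' hst
      · obtain ⟨rfl, rfl⟩ := step_star_nil hst
        exact ⟨_, _, Relation.ReflTransGen.refl,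
          Or.inl (Step.parL _ (Step.star (some a) nil)),
          Or.inl ⟨rfl, rfl⟩, Or.inl ⟨rfl, rfl⟩⟩
      · obtain ⟨rfl, rfl⟩ := step_parSS hst
        exact ⟨_, _, Relation.ReflTransGen.refl, Or.inl (Step.star (some a) nil),
          Or.inr (Or.inl ⟨rfl, rfl⟩), Or.inr (Or.inl ⟨rfl, rfl⟩)⟩
      · exact ⟨U, U', Relation.ReflTransGen.refl, Or.inl hst,
          Or.inr (Or.inr rfl), Or.inr (Or.inr rfl)⟩
  · rintro ⟨l, hind, hbb⟩
    exact no_decomp a l hind hbb
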